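/- The real part of the characteristic function of any mixed exponential distribution is the characteristic function of a normal scale mixture. Precisely: let U be any nonnegative random variable, W a standard exponential random variable, X a standard normal random variable, and Z a Rademacher random variable, with U, W, X, Z mutually independent. Then Z·W·U and X·√(2W)·U have the same distribution; equivalently, E[cos(t·W·U)] = E[exp(-t²·W·U²)] for all t ∈ ℝ. -/

import Mathlib

open MeasureTheory ProbabilityTheory Filter Set
open scoped Topology ENNReal


open MeasureTheory ProbabilityTheory Set Real Filter
open scoped ENNReal NNReal

lemma aux_sqrt_half : Real.sqrt (2*π) = 2 * Real.sqrt (π/2) := by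
  rw [show (2:ℝ)*π = 2^2*(π/2) by ring, Real.sqrt_mul (by positivity), Real.sqrt_sq (by norm_num)]

lemma aux_glasser {c : ℝ} (hc : 0 ≤ c) :
    ∫ s in Ioi (0:ℝ), Real.exp (-(s^2/2) - c^2/(2*s^2)) = Real.sqrt (π/2) * Real.exp (-c) := by
  rcases eq_or_lt_of_le hc with rfl | hc
  · simp only [ne_eq, OfNat.ofNat_ne_zero, not_false_eq_true, zero_pow, zero_div, sub_zero,
      neg_zero, Real.exp_zero, mul_one]
    have h1 := integral_gaussian_Ioi (1/2)
    rw [show π/(1/2) = 2*π by ring, aux_sqrt_half] at h1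
    rw [show Real.sqrt (π/2) = 2 * Real.sqrt (π/2)/2 by ring, ← h1]
    congr 1 with s
    ring_nf
  · have hc0 : c ≠ 0 := ne_of_gt hc
    set h : ℝ → ℝ := fun s => Real.exp (-(s^2/2) - c^2/(2*s^2)) with hh
    have hexp : ∀ x : ℝ, x ≠ 0 → h (c/x) = h x := by
      intro x hx0
      simp only [hh]
      congr 1
      field_simp
      ring
    set A := ∫ s in Ioi (0:ℝ), h s with hA
    set B := ∫ s in Ioi (0:ℝ), (c/s^2) * h s with hB
    have hIntA : IntegrableOn h (Ioi (0:ℝ)) := by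
      apply Integrable.mono'
        ((exp_neg_integrableOn_Ioi (0:ℝ) (by norm_num : (0:ℝ) < 1/2)).const_mul (Real.exp (1/2)))
      · apply Measurable.aestronglyMeasurable
        apply Real.measurable_exp.comp
        fun_prop
      · filter_upwards [ae_restrict_mem measurableSet_Ioi] with x hx
        simp only [hh]
        rw [Real.norm_eq_abs, abs_of_pos (Real.exp_pos _), ← Real.exp_add]
        apply Real.exp_le_exp.mpr
        have h1 : (0:ℝ) ≤ c^2/(2*x^2) := by positivity
        have hx' : (0:ℝ) < x := hx
        nlinarith [sq_nonneg (x-1)]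
    have himg1 : (fun s : ℝ => c/s) '' Ioi 0 = Ioi 0 := by
      ext y
      constructor
      · rintro ⟨s, hs, rfl⟩
        exact div_pos hc hs
      · intro hy
        exact ⟨c/y, div_pos hc hy, by field_simp⟩
    have hd1 : ∀ x ∈ Ioi (0:ℝ), HasDerivWithinAt (fun s : ℝ => c/s) (-(c/x^2)) (Ioi 0) x := by
      intro x hx
      have := ((hasDerivAt_inv (ne_of_gt hx)).const_mul c).hasDerivWithinAt (s := Ioi (0:ℝ))
      exact this.congr_deriv (by ring)
    have hinj1 : InjOn (fun s : ℝ => c/s) (Ioi 0) := by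
      intro s1 h1 s2 h2 he
      have h1' : (0:ℝ) < s1 := h1
      have h2' : (0:ℝ) < s2 := h2
      field_simp at he
      exact he.symm
    have habs1 : ∀ x ∈ Ioi (0:ℝ), |(-(c/x^2))| • h (c/x) = (c/x^2) * h x := by
      intro x hx
      have hx' : (0:ℝ) < x := hx
      rw [hexp x (ne_of_gt hx'), abs_of_nonpos (neg_nonpos.mpr (by positivity)), neg_neg,
        smul_eq_mul]
    have hAB : A = B := by
      have h0 := integral_image_eq_integral_abs_deriv_smul measurableSet_Ioi hd1 hinj1 h
      rw [himg1] at h0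
      rw [hA, hB, h0]
      exact setIntegral_congr_fun measurableSet_Ioi habs1
    have hIntB : IntegrableOn (fun x : ℝ => (c/x^2) * h x) (Ioi (0:ℝ)) := by
      have h0 := (integrableOn_image_iff_integrableOn_abs_deriv_smul measurableSet_Ioi hd1
        hinj1 h).mp (by rw [himg1]; exact hIntA)
      exact h0.congr_fun habs1 measurableSet_Ioi
    -- step 2
    have himg2 : (fun s : ℝ => s - c/s) '' Ioi 0 = univ := by
      apply eq_univ_of_forall
      intro u
      have h4 : (0:ℝ) < u^2 + 4*c := by positivity
      have hsq : Real.sqrt (u^2+4*c) ^ 2 = u^2 + 4*c := Real.sq_sqrt h4.le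
      have habs : |u| < Real.sqrt (u^2+4*c) := by
        rw [← Real.sqrt_sq_eq_abs]
        exact Real.sqrt_lt_sqrt (sq_nonneg u) (by linarith)
      have hu1 : -u < Real.sqrt (u^2+4*c) := lt_of_le_of_lt (neg_le_abs u) habs
      set s := (u + Real.sqrt (u^2+4*c))/2 with hs
      have hspos : 0 < s := by rw [hs]; linarith
      refine ⟨s, hspos, ?_⟩
      have hss : s^2 - u*s - c = 0 := by
        rw [hs]
        field_simp
        nlinarith [hsq]
      show s - c/s = u
      field_simp
      nlinarith [hss]
    have hinj2 : InjOn (fun s : ℝ => s - c/s) (Ioi 0) := by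
      intro s1 h1 s2 h2 he
      have h1' : (0:ℝ) < s1 := h1
      have h2' : (0:ℝ) < s2 := h2
      simp only at he
      have e : s1 * s2 * (s1 - c/s1) = s1 * s2 * (s2 - c/s2) := by rw [he]
      field_simp at e
      have e2 : ((s1 - s2) * (s1*s2 + c)) * (s1*s2) = 0 := by linear_combination (s1*s2) * e
      have e3 : (s1 - s2) * (s1*s2 + c) = 0 := by
        rcases mul_eq_zero.mp e2 with h | h
        · exact h
        · nlinarith
      rcases mul_eq_zero.mp e3 with h | h
      · linarith
      · nlinarith
    have hd2 : ∀ x ∈ Ioi (0:ℝ), HasDerivWithinAt (fun s : ℝ => s - c/s) (1 + c/x^2) (Ioi 0) x := by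
      intro x hx
      have := ((hasDerivAt_id x).sub
        ((hasDerivAt_inv (ne_of_gt hx)).const_mul c)).hasDerivWithinAt (s := Ioi (0:ℝ))
      exact this.congr_deriv (by ring)
    have key := integral_image_eq_integral_abs_deriv_smul measurableSet_Ioi hd2 hinj2
      (fun u => Real.exp (-(u^2/2)))
    rw [himg2] at key
    have lhs_eval : ∫ u in (univ : Set ℝ), Real.exp (-(u^2/2)) = Real.sqrt (2*π) := by
      rw [setIntegral_univ]
      have h1 := integral_gaussian (1/2)
      rw [show π / (1/2) = 2*π by ring] at h1
      rw [← h1]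
      congr 1 with u
      ring_nf
    have rhs_eval : ∫ x in Ioi (0:ℝ), |1 + c/x^2| • Real.exp (-((x - c/x)^2/2))
        = Real.exp c * (A + B) := by
      rw [hA, hB, ← integral_add hIntA hIntB, ← integral_const_mul]
      apply setIntegral_congr_fun measurableSet_Ioi
      intro x hx
      have hx' : (0:ℝ) < x := hx
      show |1 + c/x^2| • Real.exp (-((x - c/x)^2/2)) = Real.exp c * (h x + c/x^2 * h x)
      have he : Real.exp (-((x - c/x)^2/2)) = Real.exp c * h x := by
        rw [hh, ← Real.exp_add]
        congr 1
        field_simp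
        ring
      rw [abs_of_pos (by positivity : (0:ℝ) < 1 + c/x^2), smul_eq_mul, he, hh]
      ring
    rw [lhs_eval] at key
    rw [rhs_eval] at key
    rw [← hAB] at key
    have hfin : A = Real.sqrt (2*π) / (2 * Real.exp c) := by
      rw [key]
      field_simp
      ring
    rw [hfin, aux_sqrt_half, Real.exp_neg]
    field_simp

noncomputable def epsM : Measure ℝ := ProbabilityTheory.expMeasure 1

instance : IsProbabilityMeasure epsM := isProbabilityMeasure_expMeasure one_pos

lemma epsM_def : epsM = volume.withDensity (exponentialPDF 1) := rfl

lemma epsM_Iic (x : ℝ) :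
    epsM (Iic x) = ENNReal.ofReal (if 0 ≤ x then 1 - Real.exp (-x) else 0) := by
  rw [epsM_def, withDensity_apply _ measurableSet_Iic,
    lintegral_exponentialPDF_eq_antiDeriv one_pos x]
  simp only [one_mul]

lemma epsM_Iic_nonneg {x : ℝ} (hx : 0 ≤ x) :
    epsM (Iic x) = ENNReal.ofReal (1 - Real.exp (-x)) := by rw [epsM_Iic, if_pos hx]

lemma epsM_Iic_neg {x : ℝ} (hx : x < 0) : epsM (Iic x) = 0 := by
  rw [epsM_Iic, if_neg (not_le.mpr hx), ENNReal.ofReal_zero]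

lemma epsM_singleton (x : ℝ) : epsM {x} = 0 := by
  rw [epsM_def, withDensity_apply _ (measurableSet_singleton x)]
  exact setLIntegral_measure_zero _ _ (measure_singleton x)

lemma epsM_Iio (x : ℝ) : epsM (Iio x) = epsM (Iic x) := by
  rw [← Iio_union_right, measure_union (by simp) (measurableSet_singleton x),
    epsM_singleton, add_zero]

lemma epsM_Ici_nonneg {x : ℝ} (hx : 0 ≤ x) :
    epsM (Ici x) = ENNReal.ofReal (Real.exp (-x)) := by
  have h : epsM (Ici x) = 1 - epsM (Iio x) := by
    rw [← Set.compl_Iio, measure_compl measurableSet_Iio (measure_ne_top _ _), measure_univ]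
  rw [h, epsM_Iio, epsM_Iic_nonneg hx, show (1:ℝ≥0∞) = ENNReal.ofReal 1 by simp,
    ← ENNReal.ofReal_sub _ (sub_nonneg.mpr (by rw [Real.exp_le_one_iff]; linarith))]
  norm_num

lemma epsM_Ici_nonpos {x : ℝ} (hx : x ≤ 0) : epsM (Ici x) = 1 := by
  have h0 : epsM (Iio x) = 0 := by
    apply measure_mono_null (Iio_subset_Iic_self)
    rcases lt_or_eq_of_le hx with h | h
    · exact epsM_Iic_neg h
    · rw [h, epsM_Iic_nonneg le_rfl]; simp
  have h : epsM (Ici x) = 1 - epsM (Iio x) := by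
    rw [← Set.compl_Iio, measure_compl measurableSet_Iio (measure_ne_top _ _), measure_univ]
  rw [h, h0]; simp

-- Gaussian facts
lemma gpdf_eq (a : ℝ) :
    gaussianPDFReal 0 1 a = (Real.sqrt (2*π))⁻¹ * Real.exp (-(a^2/2)) := by
  simp only [gaussianPDFReal, NNReal.coe_one, mul_one, sub_zero]
  rw [neg_div]

lemma gpdf_even (a : ℝ) : gaussianPDFReal 0 1 (-a) = gaussianPDFReal 0 1 a := by
  rw [gpdf_eq, gpdf_eq, neg_pow]
  norm_num

lemma gpdf_nonneg (a : ℝ) : 0 ≤ gaussianPDFReal 0 1 a := gaussianPDFReal_nonneg 0 1 a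

lemma gauss_int_Ioi : ∫ a in Ioi (0:ℝ), gaussianPDFReal 0 1 a = 1/2 := by
  have htot : ∫ a, gaussianPDFReal 0 1 a = 1 := integral_gaussianPDFReal_eq_one 0 one_ne_zero
  have hint : Integrable (gaussianPDFReal 0 1) := integrable_gaussianPDFReal 0 1
  have hIic : ∫ a in Iic (0:ℝ), gaussianPDFReal 0 1 a = ∫ a in Ioi (0:ℝ), gaussianPDFReal 0 1 a := by
    have h1 := integral_comp_neg_Iic (0:ℝ) (fun a => gaussianPDFReal 0 1 (-a))
    simp only [neg_neg, neg_zero] at h1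
    rw [h1]
    exact setIntegral_congr_fun measurableSet_Ioi (fun a _ => gpdf_even a)
  have hsum := intervalIntegral.integral_Iic_add_Ioi (b := (0:ℝ)) (f := gaussianPDFReal 0 1)
    (μ := volume) hint.integrableOn hint.integrableOn
  rw [hIic, htot] at hsum
  linarith

lemma gauss_Iic_zero : (gaussianReal 0 1) (Iic 0) = 2⁻¹ := by
  rw [gaussianReal_apply_eq_integral 0 one_ne_zero]
  have hIic : ∫ a in Iic (0:ℝ), gaussianPDFReal 0 1 a = 1/2 := by
    have h1 := integral_comp_neg_Iic (0:ℝ) (fun a => gaussianPDFReal 0 1 (-a))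
    simp only [neg_neg, neg_zero] at h1
    rw [← gauss_int_Ioi, h1]
    exact setIntegral_congr_fun measurableSet_Ioi (fun a _ => gpdf_even a)
  rw [hIic]
  rw [ENNReal.ofReal_div_of_pos (by norm_num)]
  norm_num

lemma enn_half_ofReal (r : ℝ) : (2⁻¹ : ℝ≥0∞) * ENNReal.ofReal r = ENNReal.ofReal (r/2) := by
  rcases le_or_gt 0 r with hr | hr
  · rw [show (2⁻¹ : ℝ≥0∞) = ENNReal.ofReal (2⁻¹) by
      rw [ENNReal.ofReal_inv_of_pos two_pos]; norm_num,
      ← ENNReal.ofReal_mul (by norm_num)]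
    congr 1
    ring
  · rw [ENNReal.ofReal_of_nonpos hr.le, ENNReal.ofReal_of_nonpos (by linarith), mul_zero]

lemma gauss_exp_int {c : ℝ} (hc : 0 ≤ c) :
    ∫ a in Ioi (0:ℝ), gaussianPDFReal 0 1 a * Real.exp (-(c^2/(2*a^2))) = Real.exp (-c)/2 := by
  have h1 : ∀ a : ℝ, gaussianPDFReal 0 1 a * Real.exp (-(c^2/(2*a^2)))
      = (Real.sqrt (2*π))⁻¹ * Real.exp (-(a^2/2) - c^2/(2*a^2)) := by
    intro a
    rw [gpdf_eq, mul_assoc, ← Real.exp_add]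
    rw [show -(a^2/2) + -(c^2/(2*a^2)) = -(a^2/2) - c^2/(2*a^2) by ring]
  simp_rw [h1]
  rw [integral_const_mul, aux_glasser hc, aux_sqrt_half]
  have hpos : (0:ℝ) < Real.sqrt (π/2) := Real.sqrt_pos.mpr (by positivity)
  field_simp

lemma gauss_exp_integrableOn {c : ℝ} (s : Set ℝ) :
    IntegrableOn (fun a => gaussianPDFReal 0 1 a * Real.exp (-(c^2/(2*a^2)))) s := by
  apply Integrable.integrableOn
  apply Integrable.mono' (integrable_gaussianPDFReal 0 1)
  · apply Measurable.aestronglyMeasurable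
    exact (measurable_gaussianPDFReal 0 1).mul (Real.measurable_exp.comp (by fun_prop))
  · filter_upwards [] with a
    rw [Real.norm_eq_abs, abs_mul, abs_of_nonneg (gpdf_nonneg a),
      abs_of_pos (Real.exp_pos _)]
    nth_rewrite 2 [← mul_one (gaussianPDFReal 0 1 a)]
    apply mul_le_mul_of_nonneg_left _ (gpdf_nonneg a)
    rw [← Real.exp_zero]
    apply Real.exp_le_exp.mpr
    have : (0:ℝ) ≤ c^2/(2*a^2) := by positivity
    linarith

lemma gauss_lintegral_ofReal {s : Set ℝ} (hs : MeasurableSet s) {g : ℝ → ℝ}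
    (hg : Measurable g) (hgnn : ∀ a, 0 ≤ g a)
    (hint : IntegrableOn (fun a => gaussianPDFReal 0 1 a * g a) s) :
    ∫⁻ a in s, ENNReal.ofReal (g a) ∂(gaussianReal 0 1)
      = ENNReal.ofReal (∫ a in s, gaussianPDFReal 0 1 a * g a) := by
  rw [gaussianReal_of_var_ne_zero 0 one_ne_zero, restrict_withDensity hs,
    lintegral_withDensity_eq_lintegral_mul _ (measurable_gaussianPDF 0 1) hg.ennreal_ofReal,
    ofReal_integral_eq_lintegral_ofReal hint
      (ae_of_all _ (fun a => mul_nonneg (gpdf_nonneg a) (hgnn a)))]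
  apply lintegral_congr
  intro a
  simp only [Pi.mul_apply, gaussianPDF]
  rw [← ENNReal.ofReal_mul (gpdf_nonneg a)]

noncomputable def zetaM : Measure ℝ :=
  (2⁻¹ : ℝ≥0∞) • Measure.dirac 1 + (2⁻¹ : ℝ≥0∞) • Measure.dirac (-1)

instance : IsProbabilityMeasure zetaM := by
  constructor
  simp [zetaM]
  rw [← ENNReal.inv_two_add_inv_two]

noncomputable def targetCDF (x : ℝ) : ℝ≥0∞ :=
  if 0 ≤ x then ENNReal.ofReal (1 - Real.exp (-x) / 2) else ENNReal.ofReal (Real.exp x / 2)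

lemma lhs_cdf (x : ℝ) : 2⁻¹ * epsM (Iic x) + 2⁻¹ * epsM (Ici (-x)) = targetCDF x := by
  rcases le_or_gt 0 x with hx | hx
  · rw [targetCDF, if_pos hx, epsM_Iic_nonneg hx, epsM_Ici_nonpos (by linarith), mul_one,
      enn_half_ofReal, show (2⁻¹ : ℝ≥0∞) = ENNReal.ofReal (1/2) by
        rw [ENNReal.ofReal_div_of_pos (by norm_num)]; norm_num,
      ← ENNReal.ofReal_add (by nlinarith [Real.exp_le_one_iff.mpr (by linarith : -x ≤ 0)])
        (by norm_num)]
    congr 1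
    ring
  · rw [targetCDF, if_neg (not_le.mpr hx), epsM_Iic_neg hx, mul_zero, zero_add,
      epsM_Ici_nonneg (by linarith), enn_half_ofReal]
    congr 1
    rw [neg_neg]

lemma set_pos {x a : ℝ} (hx : 0 ≤ x) (ha : 0 < a) :
    {w : ℝ | a * Real.sqrt (2*w) ≤ x} = Iic (x^2/(2*a^2)) := by
  have ha2 : a ≠ 0 := ne_of_gt ha
  have he : (x/a)^2 = 2*(x^2/(2*a^2)) := by field_simp
  ext w
  simp only [mem_setOf_eq, mem_Iic]
  constructor
  · intro h
    have h2 : Real.sqrt (2*w) ≤ x/a := by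
      rw [le_div_iff₀ ha]
      nlinarith
    have h3 := (Real.sqrt_le_iff.mp h2).2
    linarith [he ▸ h3]
  · intro h
    have h2 : 2*w ≤ (x/a)^2 := by rw [he]; linarith
    have h3 : Real.sqrt (2*w) ≤ x/a := by
      calc Real.sqrt (2*w) ≤ Real.sqrt ((x/a)^2) := Real.sqrt_le_sqrt h2
        _ = x/a := Real.sqrt_sq (by positivity)
    calc a * Real.sqrt (2*w) ≤ a * (x/a) := by nlinarith
      _ = x := by field_simp

lemma set_neg {x a : ℝ} (hx : x < 0) (ha : a < 0) :
    {w : ℝ | a * Real.sqrt (2*w) ≤ x} = Ici (x^2/(2*a^2)) := by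
  have ha2 : a ≠ 0 := ne_of_lt ha
  have hxa : 0 < x/a := div_pos_of_neg_of_neg hx ha
  have he : (x/a)^2 = 2*(x^2/(2*a^2)) := by field_simp
  ext w
  simp only [mem_setOf_eq, mem_Ici]
  constructor
  · intro h
    have h2 : x/a ≤ Real.sqrt (2*w) := by
      rw [div_le_iff_of_neg ha]
      nlinarith
    have h3 := (Real.le_sqrt' hxa).mp h2
    linarith [he ▸ h3]
  · intro h
    have h2 : (x/a)^2 ≤ 2*w := by rw [he]; linarith
    have h3 : x/a ≤ Real.sqrt (2*w) := by
      calc x/a = Real.sqrt ((x/a)^2) := (Real.sqrt_sq hxa.le).symm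
        _ ≤ Real.sqrt (2*w) := Real.sqrt_le_sqrt h2
    have h4 := mul_le_mul_of_nonpos_left h3 ha.le
    have h5 : a * (x/a) = x := by field_simp
    linarith

lemma exp_term_le_one {x a : ℝ} : Real.exp (-(x^2/(2*a^2))) ≤ 1 := by
  rw [← Real.exp_zero]
  apply Real.exp_le_exp.mpr
  have : (0:ℝ) ≤ x^2/(2*a^2) := by positivity
  linarith

lemma rhs_cdf (x : ℝ) :
    ∫⁻ a, epsM {w | a * Real.sqrt (2*w) ≤ x} ∂(gaussianReal 0 1) = targetCDF x := by
  rcases le_or_gt 0 x with hx | hx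
  · rw [← lintegral_add_compl (fun a => epsM {w | a * Real.sqrt (2*w) ≤ x}) measurableSet_Iic
      (μ := gaussianReal 0 1), Set.compl_Iic]
    have hA1 : ∫⁻ a in Iic (0:ℝ), epsM {w | a * Real.sqrt (2*w) ≤ x} ∂(gaussianReal 0 1)
        = 2⁻¹ := by
      have hpt : ∀ a ∈ Iic (0:ℝ), epsM {w | a * Real.sqrt (2*w) ≤ x} = 1 := by
        intro a ha
        have : {w : ℝ | a * Real.sqrt (2*w) ≤ x} = univ := by
          apply eq_univ_of_forall
          intro w
          have h1 := Real.sqrt_nonneg (2*w)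
          show a * Real.sqrt (2*w) ≤ x
          have ha' : a ≤ 0 := ha
          nlinarith
        rw [this, measure_univ]
      rw [setLIntegral_congr_fun measurableSet_Iic hpt, setLIntegral_one,
        gauss_Iic_zero]
    have hA2 : ∫⁻ a in Ioi (0:ℝ), epsM {w | a * Real.sqrt (2*w) ≤ x} ∂(gaussianReal 0 1)
        = ENNReal.ofReal (1/2 - Real.exp (-x)/2) := by
      have hpt : ∀ a ∈ Ioi (0:ℝ), epsM {w | a * Real.sqrt (2*w) ≤ x}
          = ENNReal.ofReal (1 - Real.exp (-(x^2/(2*a^2)))) := by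
        intro a ha
        rw [set_pos hx ha, epsM_Iic_nonneg (by positivity)]
      rw [setLIntegral_congr_fun measurableSet_Ioi hpt,
        gauss_lintegral_ofReal measurableSet_Ioi
          (by fun_prop : Measurable (fun a : ℝ => 1 - Real.exp (-(x^2/(2*a^2)))))
          (fun a => by linarith [exp_term_le_one (x := x) (a := a)]) ?hint]
      case hint =>
        have h2 : ∀ a : ℝ, gaussianPDFReal 0 1 a * (1 - Real.exp (-(x^2/(2*a^2))))
            = gaussianPDFReal 0 1 a - gaussianPDFReal 0 1 a * Real.exp (-(x^2/(2*a^2))) := by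
          intro a; ring
        simp_rw [h2]
        exact ((integrable_gaussianPDFReal 0 1).integrableOn).sub (gauss_exp_integrableOn _)
      congr 1
      have h2 : ∀ a : ℝ, gaussianPDFReal 0 1 a * (1 - Real.exp (-(x^2/(2*a^2))))
          = gaussianPDFReal 0 1 a - gaussianPDFReal 0 1 a * Real.exp (-(x^2/(2*a^2))) := by
        intro a; ring
      simp_rw [h2]
      rw [integral_sub ((integrable_gaussianPDFReal 0 1).integrableOn)
        (gauss_exp_integrableOn _), gauss_int_Ioi, gauss_exp_int hx]
    rw [hA1, hA2, targetCDF, if_pos hx,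
      show (2⁻¹ : ℝ≥0∞) = ENNReal.ofReal (1/2) by
        rw [ENNReal.ofReal_div_of_pos (by norm_num)]; norm_num,
      ← ENNReal.ofReal_add (by norm_num)
        (by nlinarith [Real.exp_le_one_iff.mpr (by linarith : -x ≤ 0)])]
    congr 1
    ring
  · rw [← lintegral_add_compl (fun a => epsM {w | a * Real.sqrt (2*w) ≤ x}) measurableSet_Iio
      (μ := gaussianReal 0 1), Set.compl_Iio]
    have hB2 : ∫⁻ a in Ici (0:ℝ), epsM {w | a * Real.sqrt (2*w) ≤ x} ∂(gaussianReal 0 1)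
        = 0 := by
      have hpt : ∀ a ∈ Ici (0:ℝ), epsM {w | a * Real.sqrt (2*w) ≤ x} = 0 := by
        intro a ha
        have : {w : ℝ | a * Real.sqrt (2*w) ≤ x} = ∅ := by
          apply eq_empty_iff_forall_notMem.mpr
          intro w hw
          simp only [mem_setOf_eq] at hw
          have h1 := Real.sqrt_nonneg (2*w)
          have ha' : 0 ≤ a := ha
          nlinarith
        rw [this, measure_empty]
      rw [setLIntegral_congr_fun measurableSet_Ici hpt, lintegral_zero]
    have hB1 : ∫⁻ a in Iio (0:ℝ), epsM {w | a * Real.sqrt (2*w) ≤ x} ∂(gaussianReal 0 1)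
        = ENNReal.ofReal (Real.exp x/2) := by
      have hpt : ∀ a ∈ Iio (0:ℝ), epsM {w | a * Real.sqrt (2*w) ≤ x}
          = ENNReal.ofReal (Real.exp (-(x^2/(2*a^2)))) := by
        intro a ha
        rw [set_neg hx ha, epsM_Ici_nonneg (by positivity)]
      rw [setLIntegral_congr_fun measurableSet_Iio hpt,
        gauss_lintegral_ofReal measurableSet_Iio
          (by fun_prop : Measurable (fun a : ℝ => Real.exp (-(x^2/(2*a^2)))))
          (fun a => (Real.exp_pos _).le) (gauss_exp_integrableOn _)]
      congr 1
      have hIio : ∫ a in Iio (0:ℝ), gaussianPDFReal 0 1 a * Real.exp (-(x^2/(2*a^2)))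
          = ∫ a in Iic (0:ℝ), gaussianPDFReal 0 1 a * Real.exp (-(x^2/(2*a^2))) :=
        setIntegral_congr_set Iio_ae_eq_Iic
      rw [hIio]
      have h1 := integral_comp_neg_Iic (0:ℝ)
        (fun a => gaussianPDFReal 0 1 (-a) * Real.exp (-(x^2/(2*(-a)^2))))
      simp only [neg_neg, neg_zero] at h1
      rw [h1]
      have h2 : ∀ a : ℝ, gaussianPDFReal 0 1 (-a) * Real.exp (-(x^2/(2*(-a)^2)))
          = gaussianPDFReal 0 1 a * Real.exp (-((-x)^2/(2*a^2))) := by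
        intro a
        rw [gpdf_even, neg_sq, neg_sq]
      rw [setIntegral_congr_fun measurableSet_Ioi (fun a _ => h2 a),
        gauss_exp_int (by linarith : (0:ℝ) ≤ -x), neg_neg]
    rw [hB1, hB2, add_zero, targetCDF, if_neg (not_le.mpr hx)]

lemma measurable_mulsqrt : Measurable (fun p : ℝ×ℝ => p.1 * Real.sqrt (2*p.2)) :=
  measurable_fst.mul ((Real.continuous_sqrt.measurable).comp (measurable_const.mul measurable_snd))

lemma key_measure :
    Measure.map (fun p : ℝ×ℝ => p.1 * p.2) (zetaM.prod epsM)
      = Measure.map (fun p : ℝ×ℝ => p.1 * Real.sqrt (2*p.2)) ((gaussianReal 0 1).prod epsM) := by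
  haveI : IsProbabilityMeasure (Measure.map (fun p : ℝ×ℝ => p.1 * p.2) (zetaM.prod epsM)) :=
    Measure.isProbabilityMeasure_map (measurable_fst.mul measurable_snd).aemeasurable
  apply Measure.ext_of_Iic
  intro x
  rw [Measure.map_apply (f := fun p : ℝ×ℝ => p.1 * p.2) (measurable_fst.mul measurable_snd) measurableSet_Iic,
    Measure.map_apply measurable_mulsqrt measurableSet_Iic,
    Measure.prod_apply (s := (fun p : ℝ×ℝ => p.1 * p.2) ⁻¹' Iic x) ((measurable_fst.mul measurable_snd) measurableSet_Iic),
    Measure.prod_apply (measurable_mulsqrt measurableSet_Iic)]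
  have hL : ∫⁻ a, epsM (Prod.mk a ⁻¹' ((fun p : ℝ×ℝ => p.1 * p.2) ⁻¹' Iic x)) ∂zetaM
      = targetCDF x := by
    rw [← lhs_cdf x]
    rw [zetaM, lintegral_add_measure, lintegral_smul_measure, lintegral_smul_measure,
      lintegral_dirac, lintegral_dirac]
    congr 2
    · show epsM {w | (1:ℝ) * w ≤ x} = epsM (Iic x)
      congr 1
      ext w
      simp
    · show epsM {w | (-1:ℝ) * w ≤ x} = epsM (Ici (-x))
      congr 1
      ext w
      simp only [mem_setOf_eq, mem_Ici]
      constructor <;> intro h <;> linarith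
  have hR : ∫⁻ a, epsM (Prod.mk a ⁻¹'
        ((fun p : ℝ×ℝ => p.1 * Real.sqrt (2*p.2)) ⁻¹' Iic x)) ∂(gaussianReal 0 1)
      = targetCDF x := by
    rw [← rhs_cdf x]
    rfl
  rw [hL, hR]

lemma aux_exp_int {b : ℝ} (hb : 0 < b) : ∫ x in Ioi (0:ℝ), Real.exp (-(b*x)) = 1/b := by
  have h := MeasureTheory.integral_comp_mul_left_Ioi (fun x => Real.exp (-x)) 0 hb
  simp only [mul_zero, integral_exp_neg_Ioi, neg_zero, Real.exp_zero, smul_eq_mul, mul_one] at h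
  rw [h]
  simp [one_div]

lemma aux_cos_int (a : ℝ) : ∫ x in Ioi (0:ℝ), Real.cos (a*x) * Real.exp (-x) = 1/(1+a^2) := by
  have ha : (0:ℝ) < 1 + a^2 := by positivity
  set F : ℝ → ℝ := fun x => Real.exp (-x) * (a * Real.sin (a*x) - Real.cos (a*x)) / (1+a^2) with hF
  have hderiv : ∀ x ∈ Ici (0:ℝ), HasDerivAt F (Real.cos (a*x) * Real.exp (-x)) x := by
    intro x _
    have h1 : HasDerivAt (fun x : ℝ => Real.exp (-x)) (-Real.exp (-x)) x := by
      simpa [Function.comp_def] using (Real.hasDerivAt_exp (-x)).comp x (hasDerivAt_neg x)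
    have h2 : HasDerivAt (fun x : ℝ => a * Real.sin (a*x) - Real.cos (a*x))
        (a * (Real.cos (a*x) * a) - -Real.sin (a*x) * a) x := by
      have hs : HasDerivAt (fun x : ℝ => Real.sin (a*x)) (Real.cos (a*x) * a) x := by
        simpa [Function.comp_def] using (Real.hasDerivAt_sin (a*x)).comp x ((hasDerivAt_id x).const_mul a)
      have hc : HasDerivAt (fun x : ℝ => Real.cos (a*x)) (-Real.sin (a*x) * a) x := by
        simpa [Function.comp_def] using (Real.hasDerivAt_cos (a*x)).comp x ((hasDerivAt_id x).const_mul a)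
      exact (hs.const_mul a).sub hc
    have := ((h1.mul h2).div_const (1+a^2))
    exact this.congr_deriv (by rw [div_eq_iff ha.ne']; ring)
  have hint : IntegrableOn (fun x => Real.cos (a*x) * Real.exp (-x)) (Ioi (0:ℝ)) := by
    refine Integrable.mono' (exp_neg_integrableOn_Ioi 0 one_pos) ?_ ?_
    · exact ((Real.continuous_cos.comp (continuous_const.mul continuous_id)).mul
        (Real.continuous_exp.comp continuous_neg)).aestronglyMeasurable
    · filter_upwards [] with x
      rw [norm_mul]
      calc ‖Real.cos (a*x)‖ * ‖Real.exp (-x)‖ ≤ 1 * ‖Real.exp (-x)‖ := by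
            apply mul_le_mul_of_nonneg_right _ (norm_nonneg _)
            rw [Real.norm_eq_abs]; exact Real.abs_cos_le_one _
        _ ≤ Real.exp (-1*x) := by rw [one_mul, Real.norm_eq_abs, abs_of_pos (Real.exp_pos _)]; simp
  have hlim : Tendsto F atTop (nhds 0) := by
    have hb : Tendsto (fun x : ℝ => Real.exp (-x) * (2 * (|a|+1))) atTop (nhds 0) := by
      simpa using (Real.tendsto_exp_neg_atTop_nhds_zero.comp tendsto_id).mul_const (2 * (|a|+1))
    have h0 : Tendsto (fun x : ℝ => Real.exp (-x) * (a * Real.sin (a*x) - Real.cos (a*x))) atTop (nhds 0) := by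
      apply squeeze_zero_norm _ hb
      intro x
      rw [norm_mul, Real.norm_eq_abs (Real.exp _), abs_of_pos (Real.exp_pos _)]
      apply mul_le_mul_of_nonneg_left _ (Real.exp_pos _).le
      calc ‖a * Real.sin (a*x) - Real.cos (a*x)‖ ≤ ‖a * Real.sin (a*x)‖ + ‖Real.cos (a*x)‖ := norm_sub_le _ _
        _ ≤ |a| * 1 + 1 := by
            rw [norm_mul, Real.norm_eq_abs a]
            gcongr
            · exact Real.norm_eq_abs (Real.sin _) ▸ Real.abs_sin_le_one _
            · exact Real.norm_eq_abs (Real.cos _) ▸ Real.abs_cos_le_one _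
        _ ≤ 2 * (|a|+1) := by nlinarith [abs_nonneg a]
    simpa [hF] using h0.div_const (1+a^2)
  have := integral_Ioi_of_hasDerivAt_of_tendsto' (f := F)
      (f' := fun x => Real.cos (a*x) * Real.exp (-x)) hderiv hint hlim
  rw [this, hF]
  simp
  field_simp

lemma epsM_integral (g : ℝ → ℝ) :
    ∫ w, g w ∂epsM = ∫ w in Ioi (0:ℝ), g w * Real.exp (-w) := by
  rw [epsM_def]
  have h0 : volume.withDensity (exponentialPDF 1)
      = volume.withDensity (fun w => ((Real.toNNReal (exponentialPDFReal 1 w) : ℝ≥0) : ℝ≥0∞)) :=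
    rfl
  rw [h0, integral_withDensity_eq_integral_smul
    ((measurable_exponentialPDFReal 1).real_toNNReal) g]
  have h1 : ∀ w : ℝ, (Real.toNNReal (exponentialPDFReal 1 w)) • g w
      = exponentialPDFReal 1 w * g w := by
    intro w
    rw [NNReal.smul_def, smul_eq_mul, Real.coe_toNNReal _ (exponentialPDFReal_nonneg one_pos w)]
  simp_rw [h1]
  have h2 : ∫ w, exponentialPDFReal 1 w * g w
      = ∫ w in Ici (0:ℝ), exponentialPDFReal 1 w * g w := by
    symm
    apply setIntegral_eq_integral_of_forall_compl_eq_zero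
    intro w hw
    simp only [mem_Ici, not_le] at hw
    simp only [exponentialPDFReal, gammaPDFReal]
    rw [if_neg (not_le.mpr hw), zero_mul]
  rw [h2, integral_Ici_eq_integral_Ioi]
  apply setIntegral_congr_fun measurableSet_Ioi
  intro w hw
  have hw' : (0:ℝ) < w := hw
  simp only [exponentialPDFReal, gammaPDFReal]
  rw [if_pos hw'.le]
  simp only [rpow_one, Real.Gamma_one, div_one, sub_self, Real.rpow_zero, one_mul, rpow_zero]
  ring

open scoped Topology


/-- The real part of the characteristic function of any mixed exponential
distribution is the characteristic function of a normal scale mixture. Precisely: if `U`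
is a nonnegative random variable, `W` a standard exponential random variable, `X` a
standard normal random variable and `Z` a Rademacher random variable, with `U, W, X, Z`
mutually independent, then `Z·W·U` and `X·√(2W)·U` have the same distribution;
equivalently, `E[cos (t·W·U)] = E[exp (-t²·W·U²)]` for all `t ∈ ℝ`. -/
theorem re_charFun_mixed_exponential_is_normal_scale_mixture
    {Ω : Type*} [MeasurableSpace Ω] (P : Measure Ω) [IsProbabilityMeasure P]
    (U W X Z : Ω → ℝ)
    (hUm : Measurable U) (hWm : Measurable W) (hXm : Measurable X) (hZm : Measurable Z)
    (hUnn : ∀ᵐ ω ∂P, 0 ≤ U ω)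
    (hW : ∀ x : ℝ, 0 ≤ x → P {ω | x < W ω} = ENNReal.ofReal (Real.exp (-x)))
    (hX : Measure.map X P = gaussianReal 0 1)
    (hZ : P {ω | Z ω = 1} = 1 / 2 ∧ P {ω | Z ω = -1} = 1 / 2)
    (hindep : iIndepFun ![U, W, X, Z] P) :
    Measure.map (fun ω => Z ω * W ω * U ω) P
        = Measure.map (fun ω => X ω * Real.sqrt (2 * W ω) * U ω) P
      ∧ ∀ t : ℝ,
        ∫ ω, Real.cos (t * (W ω * U ω)) ∂P
          = ∫ ω, Real.exp (-(t ^ 2 * W ω * (U ω) ^ 2)) ∂P := by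
  classical
  have hmvec : ∀ i, Measurable (![U, W, X, Z] i) := by
    intro i; fin_cases i <;> assumption
  -- law of W
  have hWlaw : Measure.map W P = epsM := by
    haveI : IsProbabilityMeasure (Measure.map W P) := Measure.isProbabilityMeasure_map hWm.aemeasurable
    apply Measure.ext_of_Iic
    intro x
    rw [Measure.map_apply hWm measurableSet_Iic]
    rcases le_or_gt 0 x with hx | hx
    · have hset : W ⁻¹' Iic x = (W ⁻¹' Ioi x)ᶜ := by
        ext ω; simp [not_lt]
      have hsetOf : {ω | x < W ω} = W ⁻¹' Ioi x := rfl
      rw [hset, measure_compl (hWm measurableSet_Ioi) (measure_ne_top _ _), measure_univ,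
        ← hsetOf, hW x hx, epsM_Iic_nonneg hx, show (1:ℝ≥0∞) = ENNReal.ofReal 1 by simp,
        ← ENNReal.ofReal_sub _ (Real.exp_pos _).le]
    · rw [epsM_Iic_neg hx]
      have h0 : P ((W ⁻¹' Ioi 0)ᶜ) = 0 := by
        rw [measure_compl (hWm measurableSet_Ioi) (measure_ne_top _ _), measure_univ,
          show W ⁻¹' Ioi 0 = {ω | (0:ℝ) < W ω} from rfl, hW 0 le_rfl]
        simp
      apply measure_mono_null _ h0
      intro ω hω
      simp only [mem_preimage, mem_Iic] at hω
      simp only [mem_compl_iff, mem_preimage, mem_Ioi, not_lt]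
      linarith
  -- law of Z
  have hZlaw : Measure.map Z P = zetaM := by
    apply Measure.ext
    intro s hs
    rw [Measure.map_apply hZm hs]
    have hAm : MeasurableSet (Z ⁻¹' {1}) := hZm (measurableSet_singleton 1)
    have hBm : MeasurableSet (Z ⁻¹' {-1}) := hZm (measurableSet_singleton (-1))
    have hPA : P (Z ⁻¹' {1}) = 2⁻¹ := by
      rw [show Z ⁻¹' {1} = {ω | Z ω = 1} from by ext ω; simp, hZ.1, one_div]
    have hPB : P (Z ⁻¹' {-1}) = 2⁻¹ := by
      rw [show Z ⁻¹' {-1} = {ω | Z ω = -1} from by ext ω; simp, hZ.2, one_div]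
    have hdisj : Disjoint (Z ⁻¹' {1}) (Z ⁻¹' {-1}) := by
      rw [Set.disjoint_left]
      intro ω h1 h2
      simp only [mem_preimage, mem_singleton_iff] at h1 h2
      rw [h1] at h2
      norm_num at h2
    have hAB1 : P (Z ⁻¹' {1} ∪ Z ⁻¹' {-1}) = 1 := by
      rw [measure_union hdisj hBm, hPA, hPB, ENNReal.inv_two_add_inv_two]
    have hcompl : P ((Z ⁻¹' {1} ∪ Z ⁻¹' {-1})ᶜ) = 0 := by
      rw [measure_compl (hAm.union hBm) (measure_ne_top _ _), measure_univ, hAB1, tsub_self]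
    have hmain : P (Z ⁻¹' s)
        = P ((Z ⁻¹' s) ∩ (Z ⁻¹' {1})) + P ((Z ⁻¹' s) ∩ (Z ⁻¹' {-1})) :=
      calc P (Z ⁻¹' s) = P ((Z ⁻¹' s) ∩ (Z ⁻¹' {1} ∪ Z ⁻¹' {-1})) :=
            (measure_inter_conull hcompl).symm
        _ = P (((Z ⁻¹' s) ∩ (Z ⁻¹' {1})) ∪ ((Z ⁻¹' s) ∩ (Z ⁻¹' {-1}))) := by
            rw [Set.inter_union_distrib_left]
        _ = P ((Z ⁻¹' s) ∩ (Z ⁻¹' {1})) + P ((Z ⁻¹' s) ∩ (Z ⁻¹' {-1})) :=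
            measure_union (hdisj.mono inf_le_right inf_le_right) ((hZm hs).inter hBm)
    have hA_eval : P ((Z ⁻¹' s) ∩ (Z ⁻¹' {1})) = if (1:ℝ) ∈ s then (2⁻¹ : ℝ≥0∞) else 0 := by
      by_cases h1 : (1:ℝ) ∈ s
      · rw [if_pos h1, Set.inter_eq_right.mpr, hPA]
        intro ω hω
        simp only [mem_preimage, mem_singleton_iff] at hω
        simp only [mem_preimage, hω]
        exact h1
      · rw [if_neg h1, show (Z ⁻¹' s) ∩ (Z ⁻¹' {1}) = ∅ from ?_, measure_empty]
        apply eq_empty_iff_forall_notMem.mpr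
        intro ω hω
        simp only [mem_inter_iff, mem_preimage, mem_singleton_iff] at hω
        exact h1 (hω.2 ▸ hω.1)
    have hB_eval : P ((Z ⁻¹' s) ∩ (Z ⁻¹' {-1})) = if (-1:ℝ) ∈ s then (2⁻¹ : ℝ≥0∞) else 0 := by
      by_cases h1 : (-1:ℝ) ∈ s
      · rw [if_pos h1, Set.inter_eq_right.mpr, hPB]
        intro ω hω
        simp only [mem_preimage, mem_singleton_iff] at hω
        simp only [mem_preimage, hω]
        exact h1
      · rw [if_neg h1, show (Z ⁻¹' s) ∩ (Z ⁻¹' {-1}) = ∅ from ?_, measure_empty]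
        apply eq_empty_iff_forall_notMem.mpr
        intro ω hω
        simp only [mem_inter_iff, mem_preimage, mem_singleton_iff] at hω
        exact h1 (hω.2 ▸ hω.1)
    rw [hmain, hA_eval, hB_eval, zetaM, Measure.add_apply, Measure.smul_apply,
      Measure.smul_apply, Measure.dirac_apply' _ hs, Measure.dirac_apply' _ hs]
    simp only [Set.indicator_apply, Pi.one_apply, smul_eq_mul]
    by_cases h1 : (1:ℝ) ∈ s <;> by_cases h2 : (-1:ℝ) ∈ s <;> simp [h1, h2]
  -- independence
  have hZW : IndepFun Z W P := by
    have h := hindep.indepFun (show (3:Fin 4) ≠ 1 by decide)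
    simpa using h
  have hXW : IndepFun X W P := by
    have h := hindep.indepFun (show (2:Fin 4) ≠ 1 by decide)
    simpa using h
  have hUW : IndepFun U W P := by
    have h := hindep.indepFun (show (0:Fin 4) ≠ 1 by decide)
    simpa using h
  have hZWU : IndepFun (fun ω => Z ω * W ω) U P := by
    have h := hindep.indepFun_prodMk hmvec 3 1 0 (by decide) (by decide)
    simp only [Matrix.cons_val_zero, Matrix.cons_val_one, Matrix.head_cons] at h
    have h2 := h.comp (measurable_fst.mul measurable_snd) measurable_id
    simpa [Function.comp_def] using h2
  have hVmeas2 : Measurable (fun ω => X ω * Real.sqrt (2 * W ω)) :=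
    hXm.mul (Real.continuous_sqrt.measurable.comp (measurable_const.mul hWm))
  have hXWU : IndepFun (fun ω => X ω * Real.sqrt (2 * W ω)) U P := by
    have h := hindep.indepFun_prodMk hmvec 2 1 0 (by decide) (by decide)
    simp only [Matrix.cons_val_zero, Matrix.cons_val_one, Matrix.head_cons] at h
    have h2 := h.comp measurable_mulsqrt measurable_id
    simpa [Function.comp_def] using h2
  -- map equalities
  have hmapZW : Measure.map (fun ω => Z ω * W ω) P
      = Measure.map (fun p : ℝ×ℝ => p.1 * p.2) (zetaM.prod epsM) := by
    rw [← hZlaw, ← hWlaw,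
      ← (indepFun_iff_map_prod_eq_prod_map_map hZm.aemeasurable hWm.aemeasurable).mp hZW,
      Measure.map_map (g := fun p : ℝ×ℝ => p.1 * p.2) (measurable_fst.mul measurable_snd) (hZm.prodMk hWm)]
    rfl
  have hmapXW : Measure.map (fun ω => X ω * Real.sqrt (2 * W ω)) P
      = Measure.map (fun p : ℝ×ℝ => p.1 * Real.sqrt (2*p.2)) ((gaussianReal 0 1).prod epsM) := by
    rw [← hX, ← hWlaw,
      ← (indepFun_iff_map_prod_eq_prod_map_map hXm.aemeasurable hWm.aemeasurable).mp hXW,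
      Measure.map_map measurable_mulsqrt (hXm.prodMk hWm)]
    rfl
  have hkey : Measure.map (fun ω => Z ω * W ω) P
      = Measure.map (fun ω => X ω * Real.sqrt (2 * W ω)) P := by
    rw [hmapZW, hmapXW, key_measure]
  constructor
  · have e1 : Measure.map (fun ω => Z ω * W ω * U ω) P
        = Measure.map (fun p : ℝ×ℝ => p.1 * p.2)
          ((Measure.map (fun ω => Z ω * W ω) P).prod (Measure.map U P)) := by
      rw [← (indepFun_iff_map_prod_eq_prod_map_map (f := fun ω => Z ω * W ω) (hZm.mul hWm).aemeasurable
          hUm.aemeasurable).mp hZWU,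
        Measure.map_map (g := fun p : ℝ×ℝ => p.1 * p.2) (measurable_fst.mul measurable_snd)
          ((hZm.mul hWm).prodMk (f := fun ω => Z ω * W ω) hUm)]
      rfl
    have e2 : Measure.map (fun ω => X ω * Real.sqrt (2 * W ω) * U ω) P
        = Measure.map (fun p : ℝ×ℝ => p.1 * p.2)
          ((Measure.map (fun ω => X ω * Real.sqrt (2 * W ω)) P).prod (Measure.map U P)) := by
      rw [← (indepFun_iff_map_prod_eq_prod_map_map hVmeas2.aemeasurable
          hUm.aemeasurable).mp hXWU,
        Measure.map_map (g := fun p : ℝ×ℝ => p.1 * p.2) (measurable_fst.mul measurable_snd) (hVmeas2.prodMk hUm)]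
      rfl
    rw [e1, e2, hkey]
  · intro t
    have hpair : Measure.map (fun ω => (U ω, W ω)) P = (Measure.map U P).prod epsM := by
      rw [← hWlaw]
      exact (indepFun_iff_map_prod_eq_prod_map_map hUm.aemeasurable hWm.aemeasurable).mp hUW
    haveI : IsProbabilityMeasure (Measure.map U P) := Measure.isProbabilityMeasure_map hUm.aemeasurable
    have hm : AEMeasurable (fun ω => (U ω, W ω)) P := (hUm.prodMk hWm).aemeasurable
    have hcontcos : Continuous (fun p : ℝ×ℝ => Real.cos (t * (p.2 * p.1))) := by fun_prop
    have hcontexp : Continuous (fun p : ℝ×ℝ => Real.exp (-(t^2 * p.2 * p.1^2))) := by fun_prop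
    have hIntcos : Integrable (fun p : ℝ×ℝ => Real.cos (t * (p.2 * p.1)))
        ((Measure.map U P).prod epsM) := by
      apply Integrable.mono' (integrable_const (1:ℝ)) hcontcos.aestronglyMeasurable
      filter_upwards [] with p
      rw [Real.norm_eq_abs]
      exact Real.abs_cos_le_one _
    have hae : ∀ᵐ p ∂((Measure.map U P).prod epsM), (0:ℝ) ≤ p.2 := by
      rw [ae_iff]
      have hset : {p : ℝ×ℝ | ¬ (0:ℝ) ≤ p.2} = (univ : Set ℝ) ×ˢ Iio (0:ℝ) := by
        ext p; simp [not_le]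
      rw [hset, Measure.prod_prod, epsM_Iio, epsM_Iic_nonneg le_rfl]
      simp
    have hIntexp : Integrable (fun p : ℝ×ℝ => Real.exp (-(t^2 * p.2 * p.1^2)))
        ((Measure.map U P).prod epsM) := by
      apply Integrable.mono' (integrable_const (1:ℝ)) hcontexp.aestronglyMeasurable
      filter_upwards [hae] with p hp
      rw [Real.norm_eq_abs, abs_of_pos (Real.exp_pos _), ← Real.exp_zero]
      apply Real.exp_le_exp.mpr
      have : (0:ℝ) ≤ t^2 * p.2 * p.1^2 := mul_nonneg (mul_nonneg (sq_nonneg t) hp) (sq_nonneg _)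
      linarith
    have hL : ∫ ω, Real.cos (t * (W ω * U ω)) ∂P
        = ∫ u, (1:ℝ)/(1+(t*u)^2) ∂(Measure.map U P) := by
      rw [show ∫ ω, Real.cos (t * (W ω * U ω)) ∂P
          = ∫ p, Real.cos (t * (p.2 * p.1)) ∂(Measure.map (fun ω => (U ω, W ω)) P) from
        (integral_map hm (by rw [hpair]; exact hcontcos.aestronglyMeasurable)).symm]
      rw [hpair, integral_prod _ hIntcos]
      refine integral_congr_ae (ae_of_all _ fun u => ?_)
      show ∫ w, Real.cos (t * (w * u)) ∂epsM = 1/(1+(t*u)^2)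
      rw [epsM_integral]
      rw [setIntegral_congr_fun measurableSet_Ioi
        (fun w _ => by rw [show t * (w * u) = (t*u)*w by ring] :
          ∀ w ∈ Ioi (0:ℝ), Real.cos (t*(w*u)) * Real.exp (-w)
            = Real.cos ((t*u)*w) * Real.exp (-w)), aux_cos_int (t*u)]
    have hR : ∫ ω, Real.exp (-(t^2 * W ω * (U ω)^2)) ∂P
        = ∫ u, (1:ℝ)/(t^2*u^2+1) ∂(Measure.map U P) := by
      rw [show ∫ ω, Real.exp (-(t^2 * W ω * (U ω)^2)) ∂P
          = ∫ p, Real.exp (-(t^2 * p.2 * p.1^2)) ∂(Measure.map (fun ω => (U ω, W ω)) P) from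
        (integral_map hm (by rw [hpair]; exact hcontexp.aestronglyMeasurable)).symm]
      rw [hpair, integral_prod _ hIntexp]
      refine integral_congr_ae (ae_of_all _ fun u => ?_)
      show ∫ w, Real.exp (-(t^2 * w * u^2)) ∂epsM = 1/(t^2*u^2+1)
      rw [epsM_integral]
      rw [setIntegral_congr_fun measurableSet_Ioi
        (fun w _ => by rw [← Real.exp_add, show -(t^2*w*u^2) + -w = -((t^2*u^2+1)*w) by ring] :
          ∀ w ∈ Ioi (0:ℝ), Real.exp (-(t^2*w*u^2)) * Real.exp (-w)
            = Real.exp (-((t^2*u^2+1)*w))), aux_exp_int (by positivity : (0:ℝ) < t^2*u^2+1)]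
    rw [hL, hR]
    refine integral_congr_ae (ae_of_all _ fun u => ?_)
    congr 1
    ring
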